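/- Let T be a nonempty ℝ-tree, S a nonempty metric space, f : T → S a quasi-isometry with constant N, and z ∈ T a fixed point. The map h : S → T defined by letting h(x) be the unique point with [z, h(x)] = ⋂_{y₀ ∈ f⁻¹(B(x,N))} [z, y₀] is a quasi-isometry with constant M = 9N². -/

import Mathlib

open Metric Set





/-- `f : S → T` is a quasi-isometry with constant `N` (a positive natural number):
every point of `T` lies within distance `N` of the image of `f`, and
`(1/N) d(x,y) - N ≤ d(f x, f y) ≤ N d(x,y) + N` for all `x y`. -/
def IsQuasiIsometryWith {S T : Type*} [MetricSpace S] [MetricSpace T]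
    (N : ℕ) (f : S → T) : Prop :=
  0 < N ∧ (∀ t : T, ∃ s : S, dist t (f s) ≤ (N : ℝ)) ∧
    ∀ x y : S, (1 / (N : ℝ)) * dist x y - N ≤ dist (f x) (f y) ∧
      dist (f x) (f y) ≤ (N : ℝ) * dist x y + N

/-- `f` is a quasi-isometry if it is a quasi-isometry with constant `N` for some `N`. -/
def IsQuasiIsometry {S T : Type*} [MetricSpace S] [MetricSpace T] (f : S → T) : Prop :=
  ∃ N : ℕ, IsQuasiIsometryWith N f
/-- `σ` is a geodesic segment from `x` to `y`: the image of an isometric embedding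
`ρ : [0, d(x,y)] → X` with `ρ 0 = x` and `ρ (d(x,y)) = y`. -/
def IsGeodesicSegment {X : Type*} [MetricSpace X] (σ : Set X) (x y : X) : Prop :=
  ∃ ρ : ℝ → X,
    (∀ s ∈ Icc (0 : ℝ) (dist x y), ∀ t ∈ Icc (0 : ℝ) (dist x y),
      dist (ρ s) (ρ t) = |s - t|) ∧
    ρ 0 = x ∧ ρ (dist x y) = y ∧ σ = ρ '' Icc (0 : ℝ) (dist x y)

/-- A metric space is geodesic if any two points are joined by a geodesic segment. -/
def IsGeodesicSpace (X : Type*) [MetricSpace X] : Prop :=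
  ∀ x y : X, ∃ σ : Set X, IsGeodesicSegment σ x y

/-- A geodesic space is `δ`-hyperbolic if for all `x, y, z` and all choices of geodesic
segments, `[x,y] ⊆ B([x,z] ∪ [y,z], δ)`. -/
def IsDeltaHyperbolic (X : Type*) [MetricSpace X] (δ : ℝ) : Prop :=
  ∀ x y z : X, ∀ σxy σxz σyz : Set X,
    IsGeodesicSegment σxy x y → IsGeodesicSegment σxz x z → IsGeodesicSegment σyz y z →
      ∀ w ∈ σxy, infDist w (σxz ∪ σyz) ≤ δ

/-- An ℝ-tree is a `0`-hyperbolic geodesic metric space. -/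
def IsRTree (X : Type*) [MetricSpace X] : Prop :=
  IsGeodesicSpace X ∧ IsDeltaHyperbolic X 0

/-- A path from `x` to `y`: a continuous map `γ : [0,1] → X` with `γ 0 = x`, `γ 1 = y`. -/
def IsPathBetween {X : Type*} [MetricSpace X] (γ : ℝ → X) (x y : X) : Prop :=
  ContinuousOn γ (Icc (0 : ℝ) 1) ∧ γ 0 = x ∧ γ 1 = y
lemma endpoint_mem_left {X : Type*} [MetricSpace X] {σ : Set X} {x y : X}
    (h : IsGeodesicSegment σ x y) : x ∈ σ := by
  obtain ⟨ρ, hiso, h0, hd, hσ⟩ := h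
  rw [hσ]
  exact ⟨0, ⟨le_refl 0, dist_nonneg⟩, h0⟩

lemma endpoint_mem_right {X : Type*} [MetricSpace X] {σ : Set X} {x y : X}
    (h : IsGeodesicSegment σ x y) : y ∈ σ := by
  obtain ⟨ρ, hiso, h0, hd, hσ⟩ := h
  rw [hσ]
  exact ⟨dist x y, ⟨dist_nonneg, le_refl _⟩, hd⟩

lemma dist_add_of_mem_seg {X : Type*} [MetricSpace X] {σ : Set X} {x y p : X}
    (h : IsGeodesicSegment σ x y) (hp : p ∈ σ) :
    dist x p + dist p y = dist x y := by
  obtain ⟨ρ, hiso, h0, hd, hσ⟩ := h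
  rw [hσ] at hp
  obtain ⟨s, hs, rfl⟩ := hp
  have h1 : dist x (ρ s) = s := by
    rw [← h0, hiso 0 ⟨le_refl 0, dist_nonneg⟩ s hs, abs_of_nonpos (by linarith [hs.1])]
    ring
  have h2 : dist (ρ s) y = dist x y - s := by
    have e := hiso s hs (dist x y) ⟨dist_nonneg, le_refl _⟩
    rw [hd] at e
    rw [e, abs_of_nonpos (by linarith [hs.2])]
    ring
  linarith

lemma isClosed_seg {X : Type*} [MetricSpace X] {σ : Set X} {x y : X}
    (h : IsGeodesicSegment σ x y) : IsClosed σ := by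
  obtain ⟨ρ, hiso, h0, hd, hσ⟩ := h
  rw [hσ]
  have hcont : ContinuousOn ρ (Icc 0 (dist x y)) := by
    apply Metric.continuousOn_iff.mpr
    intro b hb ε hε
    refine ⟨ε, hε, fun a ha hab => ?_⟩
    rw [hiso a ha b hb, ← Real.dist_eq]
    exact hab
  exact (isCompact_Icc.image_of_continuousOn hcont).isClosed

lemma tree_initial {T : Type*} [MetricSpace T] (hT : IsRTree T)
    {σ' : Set T} {z y y' : T} {ρ : ℝ → T}
    (hiso : ∀ s ∈ Icc (0:ℝ) (dist z y), ∀ t ∈ Icc (0:ℝ) (dist z y),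
      dist (ρ s) (ρ t) = |s - t|)
    (h0 : ρ 0 = z) (hd : ρ (dist z y) = y)
    (hgs' : IsGeodesicSegment σ' z y')
    {s : ℝ} (hs0 : 0 ≤ s) (hsd : s ≤ dist z y)
    (hsle : 2 * s ≤ dist z y + dist z y' - dist y y') :
    ρ s ∈ σ' := by
  obtain ⟨τ, hτ⟩ := hT.1 y y'
  have hgs : IsGeodesicSegment (ρ '' Icc 0 (dist z y)) z y := ⟨ρ, hiso, h0, hd, rfl⟩
  have hclosed' : IsClosed σ' := isClosed_seg hgs'
  have hclosedτ : IsClosed τ := isClosed_seg hτ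
  have hne : (σ' ∪ τ).Nonempty := ⟨z, Or.inl (endpoint_mem_left hgs')⟩
  have strict : ∀ s', 0 ≤ s' → s' < s → ρ s' ∈ σ' := by
    intro s' h0' hlt
    have hs'd : s' ∈ Icc (0:ℝ) (dist z y) := ⟨h0', le_trans hlt.le hsd⟩
    have hw : ρ s' ∈ ρ '' Icc 0 (dist z y) := ⟨s', hs'd, rfl⟩
    have hinf := hT.2 z y y' _ σ' τ hgs hgs' hτ (ρ s') hw
    have hmem : ρ s' ∈ σ' ∪ τ :=
      (IsClosed.mem_iff_infDist_zero (hclosed'.union hclosedτ) hne).mpr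
        (le_antisymm hinf infDist_nonneg)
    rcases hmem with hm | hm
    · exact hm
    · exfalso
      have hzw : dist z (ρ s') = s' := by
        rw [← h0, hiso 0 ⟨le_refl 0, dist_nonneg⟩ s' hs'd, abs_of_nonpos (by linarith)]
        ring
      have hwy : dist (ρ s') y = dist z y - s' := by
        have e := hiso s' hs'd (dist z y) ⟨dist_nonneg, le_refl _⟩
        rw [hd] at e
        rw [e, abs_of_nonpos (by linarith [hs'd.2])]
        ring
      have hsplit := dist_add_of_mem_seg hτ hm
      have htri : dist z y' ≤ dist z (ρ s') + dist (ρ s') y' := dist_triangle _ _ _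
      have hcomm : dist y (ρ s') = dist (ρ s') y := dist_comm _ _
      linarith
  rcases eq_or_lt_of_le hs0 with heq | hpos
  · rw [← heq, h0]; exact endpoint_mem_left hgs'
  · have hcl : ρ s ∈ closure σ' := by
      rw [Metric.mem_closure_iff]
      intro ε hε
      have hmin : 0 < min (ε/2) (s/2) := lt_min (by linarith) (by linarith)
      have hminle : min (ε/2) (s/2) ≤ s/2 := min_le_right _ _
      refine ⟨ρ (s - min (ε/2) (s/2)), strict _ (by linarith) (by linarith), ?_⟩
      have e := hiso s ⟨hs0, hsd⟩ (s - min (ε/2) (s/2)) ⟨by linarith, by linarith⟩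
      rw [e, abs_of_nonneg (by linarith)]
      have : min (ε/2) (s/2) ≤ ε/2 := min_le_left _ _
      linarith
    exact hclosed'.closure_eq ▸ hcl

lemma aux_lower {a b N : ℝ} (hN : 0 < N) (h : 1/N * a - N ≤ b) : a ≤ N * b + N^2 := by
  rw [sub_le_iff_le_add, one_div_mul_eq_div, div_le_iff₀ hN] at h
  nlinarith
/-- for `f : T → S` a quasi-isometry with constant `N` from a nonempty
ℝ-tree to a nonempty metric space and `h : S → T` the map defined by
`[z, h x] = ⋂_{y₀ ∈ f⁻¹(B(x,N))} [z, y₀]`, the map `h` is a quasi-isometry with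
constant `M = 9N²`. -/
theorem retraction_quasiIsometry {T S : Type*} [MetricSpace T] [MetricSpace S]
    [Nonempty T] [Nonempty S]
    (hT : IsRTree T) (f : T → S) (N : ℕ) (hf : IsQuasiIsometryWith N f) (z : T)
    (h : S → T)
    (hh : ∀ x : S, ∀ seg : T → Set T,
      (∀ y₀ ∈ f ⁻¹' closedBall x (N : ℝ), IsGeodesicSegment (seg y₀) z y₀) →
        ∃ σ : Set T, IsGeodesicSegment σ z (h x) ∧
          (⋂ y₀ ∈ f ⁻¹' closedBall x (N : ℝ), seg y₀) = σ) :
    IsQuasiIsometryWith (9 * N ^ 2) h := by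
  obtain ⟨hN, hdense, hbound⟩ := hf
  have hNpos : (0:ℝ) < N := by exact_mod_cast hN
  have hN1 : (1:ℝ) ≤ N := by exact_mod_cast hN
  choose seg hseg using fun y₀ : T => hT.1 z y₀
  have key : ∀ (x : S) (y₀ : T), dist (f y₀) x ≤ (N:ℝ) →
      dist (h x) y₀ ≤ 3 * (N:ℝ)^2 := by
    intro x y₀ hy₀
    obtain ⟨σ, hσ, hσeq⟩ := hh x seg (fun y _ => hseg y)
    have hy₀mem : y₀ ∈ f ⁻¹' closedBall x (N:ℝ) := by
      simpa [Metric.mem_closedBall] using hy₀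
    have hxσ : h x ∈ σ := endpoint_mem_right hσ
    have hxseg : ∀ y ∈ f ⁻¹' closedBall x (N:ℝ), h x ∈ seg y := by
      intro y hy
      have hm : h x ∈ ⋂ y₁ ∈ f ⁻¹' closedBall x (N:ℝ), seg y₁ := hσeq ▸ hxσ
      exact Set.mem_iInter₂.mp hm y hy
    have hdiam : ∀ y ∈ f ⁻¹' closedBall x (N:ℝ), dist y₀ y ≤ 3 * (N:ℝ)^2 := by
      intro y hy
      have hfy : dist (f y) x ≤ (N:ℝ) := by simpa [Metric.mem_closedBall] using hy
      have hff : dist (f y₀) (f y) ≤ 2 * N := by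
        have t := dist_triangle (f y₀) x (f y)
        rw [dist_comm x (f y)] at t
        linarith
      have hlow := aux_lower hNpos (hbound y₀ y).1
      nlinarith
    have hsplit := dist_add_of_mem_seg (hseg y₀) (hxseg y₀ hy₀mem)
    by_cases hc : dist z y₀ ≤ 3 * (N:ℝ)^2
    · linarith [dist_nonneg (x := z) (y := h x)]
    · push_neg at hc
      obtain ⟨ρ₀, hiso₀, h00, h0d, him₀⟩ := hseg y₀
      have hc0 : 0 ≤ dist z y₀ - 3 * (N:ℝ)^2 := by linarith
      have hcd : dist z y₀ - 3 * (N:ℝ)^2 ≤ dist z y₀ := by nlinarith [sq_nonneg ((N:ℝ))]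
      have hp : ∀ y ∈ f ⁻¹' closedBall x (N:ℝ),
          ρ₀ (dist z y₀ - 3 * (N:ℝ)^2) ∈ seg y := by
        intro y hy
        apply tree_initial hT hiso₀ h00 h0d (hseg y) hc0 hcd
        have h1 := hdiam y hy
        have h2 : dist z y₀ ≤ dist z y + dist y₀ y := by
          rw [dist_comm y₀ y]; exact dist_triangle z y y₀
        linarith
      have hpσ : ρ₀ (dist z y₀ - 3 * (N:ℝ)^2) ∈ σ := by
        rw [← hσeq]; exact Set.mem_iInter₂.mpr hp
      have hzp : dist z (ρ₀ (dist z y₀ - 3 * (N:ℝ)^2)) = dist z y₀ - 3 * (N:ℝ)^2 := by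
        have e := hiso₀ 0 ⟨le_refl 0, dist_nonneg⟩ _ ⟨hc0, hcd⟩
        rw [h00] at e
        rw [e, abs_of_nonpos (by linarith)]
        ring
      have hsum := dist_add_of_mem_seg hσ hpσ
      have hge : dist z y₀ - 3 * (N:ℝ)^2 ≤ dist z (h x) := by
        linarith [dist_nonneg (x := ρ₀ (dist z y₀ - 3 * (N:ℝ)^2)) (y := h x)]
      linarith
  refine ⟨Nat.mul_pos (by norm_num) (Nat.pow_pos hN), ?_, ?_⟩
  · intro t
    refine ⟨f t, ?_⟩
    have hk := key (f t) t (by simp)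
    rw [dist_comm]
    push_cast
    nlinarith [sq_nonneg ((N:ℝ))]
  · intro x x'
    obtain ⟨y₀, hy₀⟩ := hdense x
    obtain ⟨y₁, hy₁⟩ := hdense x'
    rw [dist_comm] at hy₀ hy₁
    have k0 := key x y₀ hy₀
    have k1 := key x' y₁ hy₁
    have k0' : dist y₀ (h x) ≤ 3 * (N:ℝ)^2 := by rw [dist_comm]; exact k0
    have k1' : dist y₁ (h x') ≤ 3 * (N:ℝ)^2 := by rw [dist_comm]; exact k1
    have hff : dist (f y₀) (f y₁) ≤ dist x x' + 2*N := by
      have t := dist_triangle4 (f y₀) x x' (f y₁)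
      rw [dist_comm x' (f y₁)] at t
      linarith
    have hyy : dist y₀ y₁ ≤ N * (dist x x' + 2*N) + N^2 := by
      have := aux_lower hNpos (hbound y₀ y₁).1
      nlinarith
    have hupper := (hbound y₀ y₁).2
    have htri1 : dist (h x) (h x') ≤ dist (h x) y₀ + dist y₀ y₁ + dist y₁ (h x') :=
      dist_triangle4 _ _ _ _
    have htri2 : dist y₀ y₁ ≤ dist y₀ (h x) + dist (h x) (h x') + dist (h x') y₁ :=
      dist_triangle4 _ _ _ _
    have htri3 : dist x x' ≤ dist (f y₀) (f y₁) + 2*N := by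
      have t := dist_triangle4 x (f y₀) (f y₁) x'
      rw [dist_comm x (f y₀)] at t
      linarith
    have hE0 : 0 ≤ dist (h x) (h x') := dist_nonneg
    have hD0 : 0 ≤ dist x x' := dist_nonneg
    constructor
    · push_cast
      have h9 : (0:ℝ) < 9*(N:ℝ)^2 := by positivity
      rw [sub_le_iff_le_add, one_div_mul_eq_div, div_le_iff₀ h9]
      have hk1c : dist (h x') y₁ ≤ 3 * (N:ℝ)^2 := k1
      nlinarith [mul_le_mul_of_nonneg_left htri2 hNpos.le,
        mul_nonneg (mul_nonneg hNpos.le hNpos.le) hE0, sq_nonneg ((N:ℝ) - 1),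
        mul_nonneg hE0 (sub_nonneg.mpr hN1)]
    · push_cast
      have hk1c : dist y₁ (h x') ≤ 3 * (N:ℝ)^2 := k1'
      nlinarith [mul_nonneg hD0 (sub_nonneg.mpr hN1), sq_nonneg ((N:ℝ))]
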